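/- Let C_m = ⟨g⟩ be the cyclic group of order m ≥ 1. A generating pair (g^r, g^s) of C_m is transpositional (i.e., the assignment g^r ↦ g^s, g^s ↦ g^r extends to an automorphism of C_m) if and only if gcd(r,m) = 1 and s ≡ r·e (mod m) for some integer e with e² ≡ 1 (mod m). Moreover, for units r, t mod m and integers e, f with e² ≡ 1 ≡ f² (mod m), there exists an automorphism of C_m sending (g^r, g^{re}) to (g^t, g^{tf}) if and only if e ≡ f (mod m). -/

import Mathlib

lemma zmodHomKey {m : ℕ} (σ : AddAut (ZMod m)) (x : ZMod m) : σ x = σ 1 * x := by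
  obtain ⟨n, rfl⟩ := ZMod.intCast_surjective x
  calc σ ((n : ℤ) : ZMod m) = σ ((n : ℤ) • (1 : ZMod m)) := by simp [zsmul_eq_mul]
    _ = (n : ℤ) • σ 1 := map_zsmul σ _ _
    _ = σ 1 * ((n : ℤ) : ZMod m) := by simp [zsmul_eq_mul, mul_comm]

lemma isUnit_intCast_iff (m : ℕ) (r : ℤ) : IsUnit ((r : ℤ) : ZMod m) ↔ Int.gcd r m = 1 := by
  have h2 : Int.gcd r m = Nat.gcd r.natAbs m := by simp [Int.gcd]
  rw [h2, show r.natAbs.gcd m = 1 ↔ Nat.Coprime r.natAbs m from Iff.rfl, ← ZMod.isUnit_iff_coprime]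
  rcases Int.natAbs_eq r with h | h
  · conv_lhs => rw [h]
    rw [Int.cast_natCast]
  · conv_lhs => rw [h]
    rw [Int.cast_neg, Int.cast_natCast, IsUnit.neg_iff]

noncomputable def mulAut {m : ℕ} {u : ZMod m} (hu : IsUnit u) : AddAut (ZMod m) :=
  DistribMulAction.toAddAut (ZMod m)ˣ (ZMod m) hu.unit

lemma mulAut_apply {m : ℕ} {u : ZMod m} (hu : IsUnit u) (x : ZMod m) :
    mulAut hu x = u * x := by
  simp [mulAut, DistribMulAction.toAddAut, Units.smul_def, smul_eq_mul]
  rfl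



/-- In the cyclic group `C_m = ℤ/mℤ` (generator `g = 1`):
(a) a generating pair `(g^r, g^s)` is transpositional (some automorphism swaps the two
entries) iff `gcd(r, m) = 1` and `s ≡ r·e (mod m)` for some `e` with `e² ≡ 1 (mod m)`;
(b) for units `r, t` mod `m` and `e, f` with `e² ≡ 1 ≡ f² (mod m)`, an automorphism sends
`(g^r, g^{re})` to `(g^t, g^{tf})` iff `e ≡ f (mod m)`. -/
theorem stmt6 (m : ℕ) (hm : 1 ≤ m) :
    (∀ r s : ℤ, AddSubgroup.closure ({(r : ZMod m), (s : ZMod m)} : Set (ZMod m)) = ⊤ →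
      ((∃ σ : AddAut (ZMod m),
          σ (r : ZMod m) = (s : ZMod m) ∧ σ (s : ZMod m) = (r : ZMod m)) ↔
        (Int.gcd r m = 1 ∧
          ∃ e : ℤ, e ^ 2 ≡ 1 [ZMOD (m : ℤ)] ∧ s ≡ r * e [ZMOD (m : ℤ)]))) ∧
    (∀ r t e f : ℤ, Int.gcd r m = 1 → Int.gcd t m = 1 →
      e ^ 2 ≡ 1 [ZMOD (m : ℤ)] → f ^ 2 ≡ 1 [ZMOD (m : ℤ)] →
      ((∃ σ : AddAut (ZMod m), σ (r : ZMod m) = (t : ZMod m) ∧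
          σ ((r * e : ℤ) : ZMod m) = ((t * f : ℤ) : ZMod m)) ↔
        e ≡ f [ZMOD (m : ℤ)])) := by
  constructor
  · intro r s hgen
    constructor
    · rintro ⟨σ, h1, h2⟩
      -- u := σ 1 is a unit
      obtain ⟨y, hy⟩ := σ.surjective 1
      have hyu : σ 1 * y = 1 := by rw [← zmodHomKey σ y, hy]
      have hu : IsUnit (σ 1) := IsUnit.of_mul_eq_one _ hyu
      have hs : (s : ZMod m) = σ 1 * (r : ZMod m) := by rw [← zmodHomKey σ r, h1]
      -- closure {r} = ⊤
      obtain ⟨c, hc⟩ := ZMod.intCast_surjective (σ 1)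
      have hsmem : (s : ZMod m) ∈ AddSubgroup.closure {(r : ZMod m)} := by
        rw [AddSubgroup.mem_closure_singleton]
        exact ⟨c, by rw [zsmul_eq_mul, hs, hc]⟩
      have hle : AddSubgroup.closure ({(r : ZMod m), (s : ZMod m)} : Set (ZMod m)) ≤
          AddSubgroup.closure {(r : ZMod m)} := by
        apply AddSubgroup.closure_le _ |>.mpr
        intro x hx
        rcases hx with hx | hx
        · exact hx ▸ AddSubgroup.subset_closure rfl
        · simp only [Set.mem_singleton_iff] at hx
          exact hx ▸ hsmem
      have htop : AddSubgroup.closure {(r : ZMod m)} = ⊤ :=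
        top_le_iff.mp (hgen ▸ hle)
      have h1mem : (1 : ZMod m) ∈ AddSubgroup.closure {(r : ZMod m)} := htop ▸ trivial
      rw [AddSubgroup.mem_closure_singleton] at h1mem
      obtain ⟨k, hk⟩ := h1mem
      rw [zsmul_eq_mul] at hk
      have hru : IsUnit ((r : ℤ) : ZMod m) :=
        IsUnit.of_mul_eq_one _ (by rw [mul_comm] at hk; exact hk)
      refine ⟨(isUnit_intCast_iff m r).mp hru, c, ?_, ?_⟩
      · -- c^2 ≡ 1
        have : σ 1 * σ 1 * (r : ZMod m) = (r : ZMod m) := by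
          rw [mul_assoc, ← hs, ← zmodHomKey σ, h2]
        have hu2 : σ 1 * σ 1 = 1 := by
          obtain ⟨v, hv⟩ := hru
          have := congrArg (· * ((v⁻¹ : (ZMod m)ˣ) : ZMod m)) this
          simp only [← hv, mul_assoc, Units.mul_inv, mul_one] at this
          simpa using this
        rw [← ZMod.intCast_eq_intCast_iff]
        push_cast
        rw [pow_two, hc, hu2]
      · rw [← ZMod.intCast_eq_intCast_iff]
        push_cast
        rw [hs, hc, mul_comm]
    · rintro ⟨hgcd, e, he2, hse⟩
      have he2' : ((e : ZMod m)) * (e : ZMod m) = 1 := by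
        have := (ZMod.intCast_eq_intCast_iff _ _ _).mpr he2
        push_cast at this
        rw [← pow_two]; exact this
      have hue : IsUnit ((e : ℤ) : ZMod m) := IsUnit.of_mul_eq_one _ he2'
      have hse' : (s : ZMod m) = (r : ZMod m) * (e : ZMod m) := by
        have := (ZMod.intCast_eq_intCast_iff _ _ _).mpr hse
        push_cast at this
        exact this
      refine ⟨mulAut hue, ?_, ?_⟩
      · rw [mulAut_apply, hse', mul_comm]
      · rw [mulAut_apply, hse']
        ring_nf
        rw [pow_two, he2', one_mul]
  · intro r t e f hr ht he2 hf2
    have hru : IsUnit ((r : ℤ) : ZMod m) := (isUnit_intCast_iff m r).mpr hr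
    have htu : IsUnit ((t : ℤ) : ZMod m) := (isUnit_intCast_iff m t).mpr ht
    constructor
    · rintro ⟨σ, h1, h2⟩
      rw [zmodHomKey σ] at h1 h2
      have : σ 1 * (r : ZMod m) * (e : ZMod m) = (t : ZMod m) * (f : ZMod m) := by
        rw [mul_assoc]
        push_cast at h2
        rw [h2]
      rw [h1] at this
      rw [← ZMod.intCast_eq_intCast_iff]
      obtain ⟨v, hv⟩ := htu
      have := congrArg (((v⁻¹ : (ZMod m)ˣ) : ZMod m) * ·) this
      simp only [← hv, ← mul_assoc, Units.inv_mul, one_mul] at this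
      exact this
    · intro hef
      have hef' : ((e : ℤ) : ZMod m) = ((f : ℤ) : ZMod m) :=
        (ZMod.intCast_eq_intCast_iff _ _ _).mpr hef
      obtain ⟨w, hw⟩ := hru
      have hu : IsUnit ((t : ZMod m) * ((w⁻¹ : (ZMod m)ˣ) : ZMod m)) :=
        htu.mul (Units.isUnit _)
      refine ⟨mulAut hu, ?_, ?_⟩
      · rw [mulAut_apply, mul_assoc, ← hw]
        simp
      · rw [mulAut_apply]
        push_cast
        rw [show (t:ZMod m) * ((w⁻¹:(ZMod m)ˣ):ZMod m) * ((r:ZMod m) * (e:ZMod m))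
            = (t:ZMod m) * (((w⁻¹:(ZMod m)ˣ):ZMod m) * (r:ZMod m)) * (e:ZMod m) by ring]
        rw [← hw]
        simp [hef']
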